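/- arXiv:2110.14134 — 2 statements merged into one kernel-verified Lean document; each statement's English description precedes it below -/
import Mathlib

section
/- Let A = a₀·I + a·σ and B = b₀·I + b·σ be qubit observables with {a,b} linearly independent in ℝ³. Then the infimum over all qubit density matrices ρ of Δ_ρA + Δ_ρB equals |a × b| / max(|a|, |b|), where a × b is the cross product in ℝ³, and this infimum is attained by some qubit density matrix. -/
open Matrix MeasureTheory Filter Set
open scoped RealInnerProductSpace Kronecker ComplexOrder

noncomputable section

/-- ℝ³ with the Euclidean norm and inner product. -/
abbrev E3 : Type := EuclideanSpace ℝ (Fin 3)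

/-- The Pauli matrices. -/
def pauli1 : Matrix (Fin 2) (Fin 2) ℂ := !![0, 1; 1, 0]
def pauli2 : Matrix (Fin 2) (Fin 2) ℂ := !![0, -Complex.I; Complex.I, 0]
def pauli3 : Matrix (Fin 2) (Fin 2) ℂ := !![1, 0; 0, -1]

/-- The qubit observable `a₀·I + a·σ`. -/
def qObs (a0 : ℝ) (a : E3) : Matrix (Fin 2) (Fin 2) ℂ :=
  (a0 : ℂ) • (1 : Matrix (Fin 2) (Fin 2) ℂ)
    + (a 0 : ℂ) • pauli1 + (a 1 : ℂ) • pauli2 + (a 2 : ℂ) • pauli3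

/-- A density matrix: positive semidefinite with trace one. -/
def IsDensityMatrix {n : Type*} [Fintype n] (ρ : Matrix n n ℂ) : Prop :=
  ρ.PosSemidef ∧ ρ.trace = 1

/-- Mean value `⟨M⟩_ρ = Tr(Mρ)` of an observable `M` in the state `ρ`. -/
def mean {n : Type*} [Fintype n] (M ρ : Matrix n n ℂ) : ℝ :=
  (Matrix.trace (M * ρ)).re

/-- Variance `(Δ_ρ M)² = Tr(M²ρ) − (Tr(Mρ))²`. -/
def variance {n : Type*} [Fintype n] (M ρ : Matrix n n ℂ) : ℝ :=
  (Matrix.trace (M * M * ρ)).re - (mean M ρ) ^ 2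

/-- Uncertainty `Δ_ρ M` (standard deviation). -/
def uncertainty {n : Type*} [Fintype n] (M ρ : Matrix n n ℂ) : ℝ :=
  Real.sqrt (variance M ρ)

/-- Gram matrix of a tuple of vectors in ℝ³. -/
def gram {m : ℕ} (v : Fin m → E3) : Matrix (Fin m) (Fin m) ℝ :=
  Matrix.of fun i j => (inner ℝ (v i) (v j) : ℝ)

lemma gram_isHermitian {m : ℕ} (v : Fin m → E3) : (gram v).IsHermitian := by
  ext i j
  simp [_root_.gram, Matrix.conjTranspose_apply, mul_comm, real_inner_comm]

/-- Smallest eigenvalue of the Gram matrix. -/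
def lamMin {m : ℕ} (v : Fin m → E3) : ℝ := ⨅ i, (gram_isHermitian v).eigenvalues i

/-- Largest eigenvalue of the Gram matrix. -/
def lamMax {m : ℕ} (v : Fin m → E3) : ℝ := ⨆ i, (gram_isHermitian v).eigenvalues i

/-- The cross product on ℝ³ (as Euclidean space). -/
def cross3 (a b : E3) : E3 :=
  (WithLp.equiv 2 (Fin 3 → ℝ)).symm
    ![a 1 * b 2 - a 2 * b 1, a 2 * b 0 - a 0 * b 2, a 0 * b 1 - a 1 * b 0]



lemma normsq3 (a : E3) : ‖a‖^2 = a 0^2 + a 1^2 + a 2^2 := by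
  rw [← real_inner_self_eq_norm_sq, PiLp.inner_apply]
  simp [Fin.sum_univ_three, sq]

lemma inner3 (a v : E3) : ⟪a, v⟫ = a 0 * v 0 + a 1 * v 1 + a 2 * v 2 := by
  simp [PiLp.inner_apply, Fin.sum_univ_three]; ring

lemma cross3_apply (a b : E3) :
    cross3 a b 0 = a 1 * b 2 - a 2 * b 1 ∧
    cross3 a b 1 = a 2 * b 0 - a 0 * b 2 ∧
    cross3 a b 2 = a 0 * b 1 - a 1 * b 0 := by
  refine ⟨rfl, rfl, rfl⟩

lemma lagrange (a b : E3) : ‖cross3 a b‖^2 = ‖a‖^2 * ‖b‖^2 - ⟪a, b⟫^2 := by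
  rw [normsq3, normsq3, normsq3, inner3]
  show (a 1 * b 2 - a 2 * b 1)^2 + (a 2 * b 0 - a 0 * b 2)^2 + (a 0 * b 1 - a 1 * b 0)^2 = _
  ring

def blochV (ρ : Matrix (Fin 2) (Fin 2) ℂ) : E3 :=
  (WithLp.equiv 2 (Fin 3 → ℝ)).symm
    ![(ρ 0 1 + ρ 1 0).re, (Complex.I * (ρ 0 1 - ρ 1 0)).re, (ρ 0 0 - ρ 1 1).re]

lemma mean_qObs (a0 : ℝ) (a : E3) (ρ : Matrix (Fin 2) (Fin 2) ℂ) (hρ : ρ.trace = 1) :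
    mean (qObs a0 a) ρ = a0 + ⟪a, blochV ρ⟫ := by
  have h : ρ 0 0 + ρ 1 1 = 1 := by simpa [Matrix.trace, Fin.sum_univ_two] using hρ
  have h0 : ρ 1 1 = 1 - ρ 0 0 := by linear_combination h
  rw [inner3]
  simp only [mean, qObs, pauli1, pauli2, pauli3, blochV, Matrix.trace, Fin.sum_univ_two,
    Matrix.mul_apply, Matrix.add_apply, Matrix.smul_apply, Matrix.one_apply, Matrix.diag_apply,
    Matrix.cons_val', Matrix.cons_val_zero, Matrix.cons_val_one, Matrix.head_cons,
    Matrix.head_fin_const, Matrix.empty_val', Matrix.cons_val_fin_one, smul_eq_mul, h0]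
  simp [WithLp.equiv_symm_apply, PiLp.toLp_apply, Complex.add_re, Complex.mul_re, Complex.sub_re,
    Complex.ofReal_re, Complex.ofReal_im, Complex.I_re, Complex.I_im]
  ring

lemma qObs_sq (a0 : ℝ) (a : E3) :
    qObs a0 a * qObs a0 a = qObs (a0^2 + ‖a‖^2) ((2*a0) • a) := by
  have hn : ‖a‖^2 = a 0^2 + a 1^2 + a 2^2 := normsq3 a
  ext i j
  fin_cases i <;> fin_cases j <;>
    simp [qObs, pauli1, pauli2, pauli3, Matrix.mul_apply, Fin.sum_univ_two, Matrix.one_apply,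
      hn, Complex.ext_iff, PiLp.smul_apply, smul_eq_mul] <;>
    push_cast <;> (try ring_nf) <;>
    simp [Complex.ofReal_pow, Complex.ofReal_re, Complex.ofReal_im, pow_two, Complex.mul_re,
      Complex.mul_im, Complex.ofReal_mul] <;> ring

lemma variance_qObs (a0 : ℝ) (a : E3) (ρ : Matrix (Fin 2) (Fin 2) ℂ) (hρ : ρ.trace = 1) :
    variance (qObs a0 a) ρ = ‖a‖^2 - ⟪a, blochV ρ⟫^2 := by
  have h1 : (Matrix.trace (qObs a0 a * qObs a0 a * ρ)).re
      = (a0^2 + ‖a‖^2) + ⟪(2*a0) • a, blochV ρ⟫ := by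
    rw [qObs_sq]
    exact mean_qObs _ _ _ hρ
  rw [variance, h1, mean_qObs _ _ _ hρ, real_inner_smul_left]
  ring

lemma herm_entries {ρ : Matrix (Fin 2) (Fin 2) ℂ} (hH : ρ.IsHermitian) :
    ρ 1 0 = starRingEnd ℂ (ρ 0 1) ∧ (ρ 0 0).im = 0 ∧ (ρ 1 1).im = 0 := by
  have h1 : ρᴴ 1 0 = ρ 1 0 := by rw [hH]
  have h2 : ρᴴ 0 0 = ρ 0 0 := by rw [hH]
  have h3 : ρᴴ 1 1 = ρ 1 1 := by rw [hH]
  simp only [Matrix.conjTranspose_apply] at h1 h2 h3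
  refine ⟨h1.symm, ?_, ?_⟩
  · have := congrArg Complex.im h2; simp [Complex.conj_im] at this; linarith
  · have := congrArg Complex.im h3; simp [Complex.conj_im] at this; linarith

lemma bloch_norm_le {ρ : Matrix (Fin 2) (Fin 2) ℂ} (h : IsDensityMatrix ρ) :
    ‖blochV ρ‖^2 ≤ 1 := by
  obtain ⟨hPSD, htr⟩ := h
  obtain ⟨hH, hQ⟩ := Matrix.posSemidef_iff_dotProduct_mulVec.mp hPSD
  obtain ⟨h10, h00, h11⟩ := herm_entries hH
  set p := (ρ 0 0).re with hp'
  set q := (ρ 1 1).re with hq'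
  set c := ρ 0 1 with hc'
  have hrt : ρ.trace = ρ 0 0 + ρ 1 1 := by simp [Matrix.trace, Fin.sum_univ_two]
  have htr' : p + q = 1 := by
    have := congrArg Complex.re (hrt ▸ htr); simpa using this
  have hρ00 : ρ 0 0 = (p : ℂ) := Complex.ext rfl h00
  have hρ11 : ρ 1 1 = (q : ℂ) := Complex.ext rfl h11
  -- p ≥ 0
  have hp0 : 0 ≤ p := by
    have := hQ ![1, 0]
    simp [dotProduct, Matrix.mulVec, Fin.sum_univ_two] at this
    rw [Complex.le_def] at this
    simpa using this.1
  have hq0 : 0 ≤ q := by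
    have := hQ ![0, 1]
    simp [dotProduct, Matrix.mulVec, Fin.sum_univ_two] at this
    rw [Complex.le_def] at this
    simpa using this.1
  -- determinant condition
  have hd1 := hQ ![c, -(p : ℂ)]
  have hd2 := hQ ![-(q : ℂ), starRingEnd ℂ c]
  simp only [dotProduct, Matrix.mulVec, Fin.sum_univ_two, Matrix.cons_val_zero,
    Matrix.cons_val_one, Matrix.head_cons, Pi.star_apply, star_neg, RCLike.star_def,
    Complex.conj_ofReal, h10, hρ00, hρ11] at hd1 hd2
  rw [Complex.le_def] at hd1 hd2
  have hd1' := hd1.1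
  have hd2' := hd2.1
  have hdet : Complex.normSq c ≤ p * q := by
    simp only [Complex.add_re, Complex.mul_re, Complex.neg_re, Complex.neg_im,
      Complex.ofReal_re, Complex.ofReal_im, Complex.conj_re, Complex.conj_im,
      Complex.add_im, Complex.mul_im, Complex.zero_re] at hd1' hd2'
    simp only [Complex.normSq_apply]
    nlinarith [hd1', hd2', htr']
  -- conclude
  have hb : ‖blochV ρ‖^2 = 4 * Complex.normSq c + (p - q)^2 := by
    rw [normsq3]
    simp only [blochV, WithLp.equiv_symm_apply, PiLp.toLp_apply, Matrix.cons_val_zero, Matrix.cons_val_one,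
      Matrix.head_cons, h10, Complex.normSq_apply, ← hc']
    simp [Complex.add_re, Complex.sub_re, Complex.mul_re, Complex.conj_re, Complex.conj_im,
      Complex.I_re, Complex.I_im, Complex.sub_im, ← hp', ← hq']
    ring
  rw [hb]
  nlinarith [hdet, htr']

lemma triple_prod (a b u : E3) : ⟪cross3 a b, u⟫ = ⟪cross3 u a, b⟫ := by
  simp only [inner3, cross3, WithLp.equiv_symm_apply, PiLp.toLp_apply, Matrix.cons_val_zero,
    Matrix.cons_val_one, Matrix.head_cons, Matrix.cons_val_two, Matrix.tail_cons]
  ring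

lemma cross_orth (a u : E3) : ⟪cross3 u a, u⟫ = 0 := by
  simp only [inner3, cross3, WithLp.equiv_symm_apply, PiLp.toLp_apply, Matrix.cons_val_zero,
    Matrix.cons_val_one, Matrix.head_cons, Matrix.cons_val_two, Matrix.tail_cons]
  ring

lemma cross_decomp (a b u : E3) (hu : ‖u‖ = 1) :
    cross3 a b = ⟪a,u⟫ • cross3 u b + ⟪b,u⟫ • cross3 a u + ⟪cross3 a b, u⟫ • u := by
  have hu2 : u 0^2 + u 1^2 + u 2^2 = 1 := by rw [← normsq3, hu]; norm_num
  have key : ∀ i : Fin 3, cross3 a b i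
      = (⟪a,u⟫ • cross3 u b + ⟪b,u⟫ • cross3 a u + ⟪cross3 a b, u⟫ • u) i := by
    have h : ∀ i ∈ ({0, 1, 2} : Finset (Fin 3)), cross3 a b i
        = (⟪a,u⟫ • cross3 u b + ⟪b,u⟫ • cross3 a u + ⟪cross3 a b, u⟫ • u) i := by
      intro i hi
      fin_cases hi <;>
        simp only [inner3, cross3, PiLp.add_apply, PiLp.smul_apply, WithLp.equiv_symm_apply, PiLp.toLp_apply,
          Matrix.cons_val_zero, Matrix.cons_val_one, Matrix.head_cons, Matrix.cons_val_two,
          Matrix.tail_cons, smul_eq_mul]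
      · linear_combination (a 2 * b 1 - a 1 * b 2) * hu2
      · linear_combination (a 0 * b 2 - a 2 * b 0) * hu2
      · linear_combination (a 1 * b 0 - a 0 * b 1) * hu2
    intro i
    exact h i (by fin_cases i <;> simp)
  ext i
  exact key i


lemma cross3_anticomm (a u : E3) : cross3 a u = - cross3 u a := by
  ext i
  fin_cases i <;> simp [cross3, WithLp.equiv_symm_apply, PiLp.toLp_apply] <;> ring

set_option maxHeartbeats 1000000 in
lemma key_unit (a b u : E3) (hu : ‖u‖ = 1) :
    ‖cross3 a b‖ ≤ max ‖a‖ ‖b‖ *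
      (Real.sqrt (‖a‖^2 - ⟪a,u⟫^2) + Real.sqrt (‖b‖^2 - ⟪b,u⟫^2)) := by
  have hM0 : (0:ℝ) ≤ max ‖a‖ ‖b‖ := le_trans (norm_nonneg a) (le_max_left _ _)
  have hα2 : ‖cross3 u a‖^2 = ‖a‖^2 - ⟪a,u⟫^2 := by
    rw [lagrange, hu, real_inner_comm u a]; ring
  have hβ2 : ‖cross3 u b‖^2 = ‖b‖^2 - ⟪b,u⟫^2 := by
    rw [lagrange, hu, real_inner_comm u b]; ring
  rw [← hα2, ← hβ2, Real.sqrt_sq (norm_nonneg _), Real.sqrt_sq (norm_nonneg _)]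
  set g := ⟪a,u⟫ with hg
  set h := ⟪b,u⟫ with hh
  set s := ⟪cross3 a b, u⟫ with hs
  set α := ‖cross3 u a‖ with hα
  set β := ‖cross3 u b‖ with hβ
  set M := max ‖a‖ ‖b‖ with hM
  clear_value g h s α β M
  have hα0 : 0 ≤ α := by rw [hα]; exact norm_nonneg _
  have hβ0 : 0 ≤ β := by rw [hβ]; exact norm_nonneg _
  -- |s| ≤ α * β
  have hsab : |s| ≤ α * β := by
    have h1 : s = ⟪cross3 u a, b - h • u⟫ := by
      rw [inner_sub_right, real_inner_smul_right, cross_orth, hs, triple_prod]; ring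
    have h2 : ‖b - h • u‖^2 = β^2 := by
      rw [norm_sub_sq_real, real_inner_smul_right, norm_smul, hu, hβ2, Real.norm_eq_abs, ← hh]
      rw [mul_one, sq_abs]
      ring
    have h3 : ‖b - h • u‖ = β := by
      nlinarith [norm_nonneg (b - h • u), hβ0, h2]
    calc |s| ≤ ‖cross3 u a‖ * ‖b - h • u‖ := by rw [h1]; exact abs_real_inner_le_norm _ _
    _ = α * β := by rw [h3, ← hα]
  -- decomposition
  have horth : ⟪g • cross3 u b + h • cross3 a u, s • u⟫ = 0 := by
    rw [inner_add_left, real_inner_smul_left, real_inner_smul_left,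
      real_inner_smul_right, real_inner_smul_right, cross_orth, triple_prod, cross_orth]
    ring
  have h4 : ‖cross3 a b‖^2 = ‖g • cross3 u b + h • cross3 a u‖^2 + s^2 := by
    have hdec := cross_decomp a b u hu
    rw [← hg, ← hh, ← hs] at hdec
    calc ‖cross3 a b‖^2 = ‖(g • cross3 u b + h • cross3 a u) + s • u‖^2 := by
          rw [hdec, add_assoc]
    _ = ‖g • cross3 u b + h • cross3 a u‖^2
          + 2*⟪g • cross3 u b + h • cross3 a u, s • u⟫ + ‖s • u‖^2 := by
          rw [norm_add_sq_real]; try ring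
    _ = ‖g • cross3 u b + h • cross3 a u‖^2 + s^2 := by
          rw [horth, norm_smul, hu, Real.norm_eq_abs, mul_one, sq_abs]; try ring
  have h5 : ‖g • cross3 u b + h • cross3 a u‖ ≤ |g| * β + |h| * α := by
    calc ‖g • cross3 u b + h • cross3 a u‖ ≤ ‖g • cross3 u b‖ + ‖h • cross3 a u‖ :=
          norm_add_le _ _
    _ = |g| * β + |h| * α := by
          rw [norm_smul, norm_smul, cross3_anticomm a u, norm_neg]
          simp only [Real.norm_eq_abs, ← hα, ← hβ]
  have h5' : ‖g • cross3 u b + h • cross3 a u‖^2 ≤ (|g| * β + |h| * α)^2 :=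
    pow_le_pow_left₀ (norm_nonneg _) h5 2
  have h6 : s^2 ≤ (α*β)^2 := by
    rw [← sq_abs s]; exact pow_le_pow_left₀ (abs_nonneg s) hsab 2
  have hw : ‖cross3 a b‖^2 ≤ (|g| * β + |h| * α)^2 + (α*β)^2 := by linarith
  -- final algebra
  have hga : g^2 + α^2 ≤ M^2 := by
    have h7 : ‖a‖ ≤ M := by rw [hM]; exact le_max_left _ _
    nlinarith [hα2, norm_nonneg a]
  have hhb : h^2 + β^2 ≤ M^2 := by
    have h7 : ‖b‖ ≤ M := by rw [hM]; exact le_max_right _ _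
    nlinarith [hβ2, norm_nonneg b]
  have hgh : |g| * |h| ≤ M^2 := by
    have e0 : g^2*h^2 ≤ M^2*M^2 := by
      have hg2 : g^2 ≤ M^2 := by linarith [sq_nonneg α, hga]
      have hh2 : h^2 ≤ M^2 := by linarith [sq_nonneg β, hhb]
      exact mul_le_mul hg2 hh2 (sq_nonneg h) (sq_nonneg M)
    calc |g| * |h| = Real.sqrt (g^2 * h^2) := by
          rw [Real.sqrt_mul (sq_nonneg g), Real.sqrt_sq_eq_abs, Real.sqrt_sq_eq_abs]
    _ ≤ Real.sqrt (M^2*M^2) := Real.sqrt_le_sqrt e0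
    _ = M^2 := by rw [← sq, Real.sqrt_sq (sq_nonneg M)]
  have hfin : ‖cross3 a b‖^2 ≤ (M * (α + β))^2 := by
    have hga' : |g|^2 + α^2 ≤ M^2 := by rw [sq_abs]; exact hga
    have hhb' : |h|^2 + β^2 ≤ M^2 := by rw [sq_abs]; exact hhb
    have e1 : 0 ≤ (M^2 - (|g|^2+α^2)) * β^2 := mul_nonneg (by linarith) (sq_nonneg β)
    have e2 : 0 ≤ (M^2 - (|h|^2+β^2)) * α^2 := mul_nonneg (by linarith) (sq_nonneg α)
    have e3 : 0 ≤ (M^2 - |g| * |h|) * (α*β) := mul_nonneg (by linarith) (mul_nonneg hα0 hβ0)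
    have hid : (M*(α+β))^2 = (|g| * β + |h| * α)^2 + (α*β)^2
        + ((M^2 - (|g|^2+α^2)) * β^2 + (M^2 - (|h|^2+β^2)) * α^2
          + 2*((M^2 - |g| * |h|)*(α*β)) + (α*β)^2) := by ring
    linarith [hw, e1, e2, e3, sq_nonneg (α*β), hid]
  calc ‖cross3 a b‖ = Real.sqrt (‖cross3 a b‖^2) := (Real.sqrt_sq (norm_nonneg _)).symm
  _ ≤ Real.sqrt ((M * (α + β))^2) := Real.sqrt_le_sqrt hfin
  _ = M * (α + β) := Real.sqrt_sq (mul_nonneg hM0 (add_nonneg hα0 hβ0))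


lemma key_general (a b u : E3) (hu : ‖u‖ ≤ 1) :
    ‖cross3 a b‖ ≤ max ‖a‖ ‖b‖ *
      (Real.sqrt (‖a‖^2 - ⟪a,u⟫^2) + Real.sqrt (‖b‖^2 - ⟪b,u⟫^2)) := by
  rcases eq_or_ne u 0 with rfl | hu0
  · simp only [inner_zero_right, ne_eq, OfNat.ofNat_ne_zero, not_false_eq_true, zero_pow,
      sub_zero, Real.sqrt_sq (norm_nonneg a), Real.sqrt_sq (norm_nonneg b)]
    have h1 : ‖cross3 a b‖^2 ≤ (‖a‖ * ‖b‖)^2 := by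
      rw [lagrange]; nlinarith [sq_nonneg (⟪a,b⟫ : ℝ)]
    have h2 : ‖cross3 a b‖ ≤ ‖a‖ * ‖b‖ := by
      nlinarith [norm_nonneg (cross3 a b), mul_nonneg (norm_nonneg a) (norm_nonneg b)]
    have h3 : ‖a‖ * ‖b‖ ≤ max ‖a‖ ‖b‖ * (‖a‖ + ‖b‖) := by
      have := le_max_left ‖a‖ ‖b‖
      nlinarith [norm_nonneg a, norm_nonneg b, le_max_right ‖a‖ ‖b‖]
    linarith
  · set w : E3 := ‖u‖⁻¹ • u with hw
    have hun : ‖u‖ ≠ 0 := norm_ne_zero_iff.2 hu0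
    have hw1 : ‖w‖ = 1 := by
      rw [hw, norm_smul, Real.norm_eq_abs, abs_inv, abs_of_nonneg (norm_nonneg u),
        inv_mul_cancel₀ hun]
    have hered : ∀ c : E3, Real.sqrt (‖c‖^2 - ⟪c,w⟫^2) ≤ Real.sqrt (‖c‖^2 - ⟪c,u⟫^2) := by
      intro c
      apply Real.sqrt_le_sqrt
      have h1 : ⟪c,u⟫ = ‖u‖ * ⟪c,w⟫ := by
        rw [hw, real_inner_smul_right, ← mul_assoc, mul_inv_cancel₀ hun, one_mul]
      have h2 : ⟪c,u⟫^2 ≤ ⟪c,w⟫^2 := by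
        rw [h1, mul_pow]
        have hu2 : ‖u‖^2 ≤ 1 := by nlinarith [norm_nonneg u]
        nlinarith [mul_nonneg (by linarith : (0:ℝ) ≤ 1 - ‖u‖^2) (sq_nonneg (⟪c,w⟫ : ℝ))]
      linarith
    have hM0 : (0:ℝ) ≤ max ‖a‖ ‖b‖ := le_trans (norm_nonneg a) (le_max_left _ _)
    calc ‖cross3 a b‖ ≤ max ‖a‖ ‖b‖ *
          (Real.sqrt (‖a‖^2 - ⟪a,w⟫^2) + Real.sqrt (‖b‖^2 - ⟪b,w⟫^2)) := key_unit a b w hw1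
    _ ≤ _ := by
        apply mul_le_mul_of_nonneg_left _ hM0
        exact add_le_add (hered a) (hered b)

lemma norm_bloch_le_one {ρ : Matrix (Fin 2) (Fin 2) ℂ} (h : IsDensityMatrix ρ) :
    ‖blochV ρ‖ ≤ 1 := by
  nlinarith [bloch_norm_le h, norm_nonneg (blochV ρ)]

lemma uncertainty_qObs (a0 : ℝ) (a : E3) {ρ : Matrix (Fin 2) (Fin 2) ℂ}
    (hρ : ρ.trace = 1) :
    uncertainty (qObs a0 a) ρ = Real.sqrt (‖a‖^2 - ⟪a, blochV ρ⟫^2) := by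
  rw [uncertainty, variance_qObs _ _ _ hρ]

lemma lower_bound (a0 b0 : ℝ) (a b : E3) (ha : a ≠ 0)
    {ρ : Matrix (Fin 2) (Fin 2) ℂ} (h : IsDensityMatrix ρ) :
    ‖cross3 a b‖ / max ‖a‖ ‖b‖ ≤
      uncertainty (qObs a0 a) ρ + uncertainty (qObs b0 b) ρ := by
  have hM : (0:ℝ) < max ‖a‖ ‖b‖ :=
    lt_of_lt_of_le (norm_pos_iff.2 ha) (le_max_left _ _)
  rw [div_le_iff₀ hM, uncertainty_qObs _ _ h.2, uncertainty_qObs _ _ h.2, mul_comm]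
  exact key_general a b (blochV ρ) (norm_bloch_le_one h)

def stateOf (u : E3) : Matrix (Fin 2) (Fin 2) ℂ :=
  !![(1 + (u 2 : ℂ))/2, ((u 0 : ℂ) - (u 1 : ℂ) * Complex.I)/2;
     ((u 0 : ℂ) + (u 1 : ℂ) * Complex.I)/2, (1 - (u 2 : ℂ))/2]

lemma stateOf_trace (u : E3) : (stateOf u).trace = 1 := by
  simp [stateOf, Matrix.trace, Fin.sum_univ_two]
  ring

lemma stateOf_bloch (u : E3) : blochV (stateOf u) = u := by
  have key : ∀ i ∈ ({0, 1, 2} : Finset (Fin 3)), blochV (stateOf u) i = u i := by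
    intro i hi
    fin_cases hi <;>
      simp [blochV, stateOf, WithLp.equiv_symm_apply, PiLp.toLp_apply, Complex.add_re, Complex.sub_re,
        Complex.div_re, Complex.mul_re, Complex.I_re, Complex.I_im, Complex.ofReal_re,
        Complex.ofReal_im, Complex.normSq] <;> ring
  ext i
  exact key i (by fin_cases i <;> simp)

lemma quad_ineq (u0 u1 u2 cr ci dr di : ℝ) (hu : u0^2 + u1^2 + u2^2 = 1) :
    0 ≤ (1+u2)/2*(cr^2+ci^2) + (1-u2)/2*(dr^2+di^2)
      + u0*(cr*dr+ci*di) + u1*(cr*di-ci*dr) := by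
  have hAB : (cr*dr+ci*di)^2 + (cr*di-ci*dr)^2 = (cr^2+ci^2)*(dr^2+di^2) := by ring
  have hs2 : 0 ≤ cr^2+ci^2 := by positivity
  have ht2 : 0 ≤ dr^2+di^2 := by positivity
  set A := cr*dr+ci*di with hA
  set B := cr*di-ci*dr with hB
  set s2 := cr^2+ci^2 with hs
  set t2 := dr^2+di^2 with ht
  clear_value A B s2 t2
  have h1p : 0 ≤ 1+u2 := by nlinarith [sq_nonneg u0, sq_nonneg u1, sq_nonneg (u2+1)]
  have h1m : 0 ≤ 1-u2 := by nlinarith [sq_nonneg u0, sq_nonneg u1, sq_nonneg (u2-1)]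
  have hP : 0 ≤ (1+u2)/2*s2 + (1-u2)/2*t2 :=
    add_nonneg (mul_nonneg (by linarith) hs2) (mul_nonneg (by linarith) ht2)
  have h1 : (u0*A+u1*B)^2 ≤ ((1+u2)/2*s2 + (1-u2)/2*t2)^2 := by
    nlinarith [sq_nonneg (u0*B - u1*A), sq_nonneg ((1+u2)/2*s2 - (1-u2)/2*t2),
      mul_nonneg hs2 ht2]
  have h2 : |u0*A+u1*B| ≤ (1+u2)/2*s2 + (1-u2)/2*t2 := by
    have h3 := Real.sqrt_le_sqrt h1
    rwa [Real.sqrt_sq_eq_abs, Real.sqrt_sq_eq_abs, abs_of_nonneg hP] at h3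
  have h4 := neg_abs_le (u0*A+u1*B)
  linarith

lemma stateOf_psd (u : E3) (hu : ‖u‖ = 1) : (stateOf u).PosSemidef := by
  have hu2 : u 0^2 + u 1^2 + u 2^2 = 1 := by rw [← normsq3, hu]; norm_num
  refine Matrix.PosSemidef.of_dotProduct_mulVec_nonneg ?_ ?_
  · ext i j
    fin_cases i <;> fin_cases j <;>
      simp [stateOf, Matrix.conjTranspose_apply, Complex.ext_iff, Complex.div_re, Complex.div_im,
        Complex.add_re, Complex.add_im, Complex.sub_re, Complex.sub_im, Complex.mul_re,
        Complex.mul_im, Complex.I_re, Complex.I_im, Complex.ofReal_re, Complex.ofReal_im,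
        Complex.normSq, Complex.conj_re, Complex.conj_im]
  · intro x
    have hdot : dotProduct (star x) ((stateOf u) *ᵥ x) =
        (starRingEnd ℂ (x 0)) * ((1 + (u 2:ℂ))/2 * x 0 + ((u 0:ℂ) - (u 1:ℂ)*Complex.I)/2 * x 1)
        + (starRingEnd ℂ (x 1)) * (((u 0:ℂ) + (u 1:ℂ)*Complex.I)/2 * x 0
            + (1 - (u 2:ℂ))/2 * x 1) := by
      simp [dotProduct, Matrix.mulVec, Fin.sum_univ_two, stateOf]
      try ring
    rw [Complex.le_def, hdot]
    constructor
    · have hq := quad_ineq (u 0) (u 1) (u 2) (x 0).re (x 0).im (x 1).re (x 1).im hu2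
      simp only [Complex.add_re, Complex.mul_re, Complex.div_re, Complex.div_im,
        Complex.sub_re, Complex.sub_im, Complex.add_im, Complex.mul_im, Complex.I_re,
        Complex.I_im, Complex.ofReal_re, Complex.ofReal_im, Complex.normSq, Complex.conj_re,
        Complex.conj_im, Complex.one_re, Complex.one_im, Complex.zero_re,
        MonoidWithZeroHom.coe_mk, ZeroHom.coe_mk, Complex.re_ofNat, Complex.im_ofNat]
      nlinarith [hq]
    · simp only [Complex.add_re, Complex.mul_re, Complex.div_re, Complex.div_im,
        Complex.sub_re, Complex.sub_im, Complex.add_im, Complex.mul_im, Complex.I_re,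
        Complex.I_im, Complex.ofReal_re, Complex.ofReal_im, Complex.normSq, Complex.conj_re,
        Complex.conj_im, Complex.one_re, Complex.one_im, Complex.zero_re, Complex.zero_im,
        MonoidWithZeroHom.coe_mk, ZeroHom.coe_mk, Complex.re_ofNat, Complex.im_ofNat]
      ring

lemma attain (a0 b0 : ℝ) (a b : E3) (ha : a ≠ 0) (hba : ‖b‖ ≤ ‖a‖) :
    ∃ ρ : Matrix (Fin 2) (Fin 2) ℂ, IsDensityMatrix ρ ∧
      ‖cross3 a b‖ / max ‖a‖ ‖b‖ = uncertainty (qObs a0 a) ρ + uncertainty (qObs b0 b) ρ := by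
  have hA : ‖a‖ ≠ 0 := norm_ne_zero_iff.2 ha
  set u : E3 := ‖a‖⁻¹ • a with hudef
  have hu : ‖u‖ = 1 := by
    rw [hudef, norm_smul, Real.norm_eq_abs, abs_inv, abs_of_nonneg (norm_nonneg a),
      inv_mul_cancel₀ hA]
  refine ⟨stateOf u, ⟨stateOf_psd u hu, stateOf_trace u⟩, ?_⟩
  rw [uncertainty_qObs _ _ (stateOf_trace u), uncertainty_qObs _ _ (stateOf_trace u),
    stateOf_bloch]
  have hau : ⟪a,u⟫ = ‖a‖ := by
    rw [hudef, real_inner_smul_right, real_inner_self_eq_norm_sq]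
    field_simp
  have hbu : ⟪b,u⟫ = ‖a‖⁻¹ * ⟪a,b⟫ := by
    rw [hudef, real_inner_smul_right, real_inner_comm]
  have harg : ‖b‖^2 - ⟪b,u⟫^2 = (‖cross3 a b‖ / ‖a‖)^2 := by
    rw [hbu, div_pow, lagrange, mul_pow]
    field_simp
  rw [hau, sub_self, Real.sqrt_zero, zero_add, harg,
    Real.sqrt_sq (div_nonneg (norm_nonneg _) (norm_nonneg _)), max_eq_left hba]


/-- the optimal state-independent lower bound for the sum of the standard
deviations of two qubit observables. -/
theorem sum_deviations_two_observables_isLeast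
    (a0 b0 : ℝ) (a b : E3) (hab : LinearIndependent ℝ ![a, b]) :
    IsLeast {v : ℝ | ∃ ρ : Matrix (Fin 2) (Fin 2) ℂ, IsDensityMatrix ρ ∧
        v = uncertainty (qObs a0 a) ρ + uncertainty (qObs b0 b) ρ}
      (‖cross3 a b‖ / max ‖a‖ ‖b‖) := by
  have ha : a ≠ 0 := by have := hab.ne_zero 0; simpa using this
  have hb : b ≠ 0 := by have := hab.ne_zero 1; simpa using this
  constructor
  · rcases le_total ‖b‖ ‖a‖ with h | h
    · obtain ⟨ρ, hρ, heq⟩ := attain a0 b0 a b ha h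
      exact ⟨ρ, hρ, heq⟩
    · obtain ⟨ρ, hρ, heq⟩ := attain b0 a0 b a hb h
      refine ⟨ρ, hρ, ?_⟩
      rw [cross3_anticomm b a, norm_neg, max_comm, add_comm] at heq
      exact heq
  · rintro v ⟨ρ, hρ, rfl⟩
    exact lower_bound a0 b0 a b ha hρ

end
end

section
/- Let A = a₀·I + a·σ, B = b₀·I + b·σ, C = c₀·I + c·σ be qubit observables whose Bloch vectors a,b,c ∈ ℝ³ are unit vectors, and let γ, β, α ∈ (0,π) be the angles between a and b, a and c, b and c respectively (so ⟨a,b⟩ = cos γ, ⟨a,c⟩ = cos β, ⟨b,c⟩ = cos α). Assume α < β+γ, β < γ+α, γ < α+β, and α+β+γ < 2π. Define φ(t₁,t₂,t₃) = cos t₁ − cos t₂ cos t₃. Then the uncertainty region {(Δ_ρA, Δ_ρB, Δ_ρC) : ρ a qubit density matrix} equals the set of (x,y,z) ∈ [0,1]³ for which there exists ε ∈ {+1,−1} with |φ(γ,α,β)√(1−x²) + ε·φ(α,β,γ)√(1−z²)|·√(1−y²) + ε·φ(β,γ,α)·√((1−z²)(1−x²)) + (1/2)[sin²(α)·x² + sin²(β)·y²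 + sin²(γ)·z²] ≥ 1 − cos(α)cos(β)cos(γ). -/
open Matrix MeasureTheory Filter Set
open scoped RealInnerProductSpace Kronecker ComplexOrder

noncomputable section

/-- φ(t₁,t₂,t₃) = cos t₁ − cos t₂ · cos t₃. -/
def phi (t1 t2 t3 : ℝ) : ℝ := Real.cos t1 - Real.cos t2 * Real.cos t3

-- ===== auxiliary lemmas =====

def rho (r : E3) : Matrix (Fin 2) (Fin 2) ℂ := (1/2 : ℂ) • qObs 1 r

lemma rho_entries (r : E3) : rho r =
    !![((1 : ℂ) + (r 2 : ℂ))/2, ((r 0 : ℂ) - (r 1 : ℂ) * Complex.I)/2;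
       ((r 0 : ℂ) + (r 1 : ℂ) * Complex.I)/2, ((1 : ℂ) - (r 2 : ℂ))/2] := by
  ext i j
  fin_cases i <;> fin_cases j <;>
    simp [rho, qObs, pauli1, pauli2, pauli3, Matrix.one_apply] <;> ring

lemma trace_rho (r : E3) : (Matrix.trace (rho r)) = 1 := by
  simp [rho_entries, Matrix.trace_fin_two]; ring

lemma inner_E3 (a r : E3) : (inner ℝ a r : ℝ) = a 0 * r 0 + a 1 * r 1 + a 2 * r 2 := by
  simp [PiLp.inner_apply, Fin.sum_univ_three]; ring

lemma norm_sq_E3' (a : E3) : ‖a‖ ^ 2 = a 0 ^ 2 + a 1 ^ 2 + a 2 ^ 2 := by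
  rw [← real_inner_self_eq_norm_sq, inner_E3]; ring

lemma norm_le_one_E3 (a : E3) : ‖a‖ ≤ 1 ↔ a 0 ^ 2 + a 1 ^ 2 + a 2 ^ 2 ≤ 1 := by
  rw [← norm_sq_E3']
  constructor <;> intro h <;> nlinarith [norm_nonneg a]

lemma mean_rho (a0 : ℝ) (a r : E3) : mean (qObs a0 a) (rho r) = a0 + (inner ℝ a r : ℝ) := by
  simp [mean, rho_entries, qObs, pauli1, pauli2, pauli3, Matrix.trace_fin_two, Matrix.mul_apply,
    Fin.sum_univ_two, Matrix.one_apply, inner_E3, Fin.sum_univ_three]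
  ring

lemma variance_rho (a0 : ℝ) (a r : E3) (ha : ‖a‖ = 1) :
    variance (qObs a0 a) (rho r) = 1 - (inner ℝ a r : ℝ) ^ 2 := by
  have hn : a 0 ^ 2 + a 1 ^ 2 + a 2 ^ 2 = 1 := by rw [← norm_sq_E3', ha]; norm_num
  rw [variance, mean_rho]
  have : (Matrix.trace (qObs a0 a * qObs a0 a * rho r)).re
      = a0 ^ 2 + (a 0 ^ 2 + a 1 ^ 2 + a 2 ^ 2) + 2 * a0 * (inner ℝ a r : ℝ) := by
    simp [rho_entries, qObs, pauli1, pauli2, pauli3, Matrix.trace_fin_two, Matrix.mul_apply,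
      Fin.sum_univ_two, Matrix.one_apply, inner_E3, Fin.sum_univ_three]
    ring
  rw [this, hn]; ring

def mkE3 (x y z : ℝ) : E3 := WithLp.toLp 2 ![x, y, z]

lemma rho_isDensity (r : E3) (hr : ‖r‖ ≤ 1) : IsDensityMatrix (rho r) := by
  rw [norm_le_one_E3] at hr
  refine ⟨Matrix.posSemidef_iff_dotProduct_mulVec.mpr ⟨?_, ?_⟩, trace_rho r⟩
  · ext i j
    fin_cases i <;> fin_cases j <;>
      simp [rho_entries, Matrix.conjTranspose_apply, Complex.ext_iff]
  · intro x
    set A := (x 0).re; set B := (x 0).im; set C := (x 1).re; set D := (x 1).im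
    have key : 0 ≤ (A^2+B^2+C^2+D^2)
        + (r 0 * (2*(A*C+B*D)) + r 1 * (2*(A*D-B*C)) + r 2 * (A^2+B^2-C^2-D^2)) := by
      set m0 : ℝ := 2*(A*C+B*D); set m1 : ℝ := 2*(A*D-B*C); set m2 : ℝ := A^2+B^2-C^2-D^2
      have hm : m0^2 + m1^2 + m2^2 = (A^2+B^2+C^2+D^2)^2 := by simp [m0, m1, m2]; ring
      nlinarith [sq_nonneg (r 0 * m1 - r 1 * m0), sq_nonneg (r 0 * m2 - r 2 * m0),
        sq_nonneg (r 1 * m2 - r 2 * m1),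
        sq_nonneg (A^2+B^2+C^2+D^2 + (r 0 * m0 + r 1 * m1 + r 2 * m2)),
        sq_nonneg (A^2+B^2+C^2+D^2), sq_nonneg (r 0 * m0 + r 1 * m1 + r 2 * m2)]
    rw [Complex.le_def]
    constructor
    · simp [rho_entries, dotProduct, Matrix.mulVec, Fin.sum_univ_two, Complex.add_re,
        Complex.mul_re, Complex.mul_im, Complex.div_re, Complex.div_im, Complex.normSq]
      nlinarith [key]
    · simp [rho_entries, dotProduct, Matrix.mulVec, Fin.sum_univ_two, Complex.add_im,
        Complex.mul_re, Complex.mul_im, Complex.div_re, Complex.div_im, Complex.normSq]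
      ring

lemma density_eq_rho {ρ : Matrix (Fin 2) (Fin 2) ℂ} (h : IsDensityMatrix ρ) :
    ∃ r : E3, ‖r‖ ≤ 1 ∧ ρ = rho r := by
  obtain ⟨hps, htr⟩ := h
  obtain ⟨hherm, hpos⟩ := Matrix.posSemidef_iff_dotProduct_mulVec.mp hps
  set d0 := (ρ 0 0).re with hd0
  set d1 := (ρ 1 1).re with hd1
  set e := ρ 1 0 with he
  have h00 : ρ 0 0 = (d0 : ℂ) := by
    have := hherm.apply 0 0
    rw [Complex.ext_iff] at *
    refine ⟨by simp [hd0], ?_⟩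
    simp only [RCLike.star_def, Complex.conj_re, Complex.conj_im] at this
    simp only [Complex.ofReal_im]
    linarith [this.2]
  have h11 : ρ 1 1 = (d1 : ℂ) := by
    have := hherm.apply 1 1
    rw [Complex.ext_iff] at *
    refine ⟨by simp [hd1], ?_⟩
    simp only [RCLike.star_def, Complex.conj_re, Complex.conj_im] at this
    simp only [Complex.ofReal_im]
    linarith [this.2]
  have h01 : ρ 0 1 = star e := by
    rw [← star_star (ρ 0 1), hherm.apply 1 0]
  have hEq : ρ = !![(d0 : ℂ), star e; e, (d1 : ℂ)] := by
    rw [Matrix.eta_fin_two ρ, h00, h01, h11]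
  have hsum : d0 + d1 = 1 := by
    rw [Matrix.trace_fin_two, h00, h11] at htr
    have := congrArg Complex.re htr
    simpa using this
  have hpos' : ∀ x : Fin 2 → ℂ, 0 ≤ star x ⬝ᵥ (!![(d0 : ℂ), star e; e, (d1 : ℂ)] *ᵥ x) := by
    intro x; have := hpos x; rwa [hEq] at this
  have hd0nn : 0 ≤ d0 := by
    have := (Complex.le_def.mp (hpos' ![1, 0])).1
    simpa [dotProduct, Matrix.mulVec, Fin.sum_univ_two] using this
  have hd1nn : 0 ≤ d1 := by
    have := (Complex.le_def.mp (hpos' ![0, 1])).1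
    simpa [dotProduct, Matrix.mulVec, Fin.sum_univ_two] using this
  have hD0 : 0 ≤ d0 * (d0 * d1 - (e.re^2 + e.im^2)) := by
    have := (Complex.le_def.mp (hpos' ![star e, -(d0 : ℂ)])).1
    simp [dotProduct, Matrix.mulVec, Fin.sum_univ_two, Complex.mul_re, Complex.mul_im,
      Complex.star_def] at this
    nlinarith [this]
  have hD1 : 0 ≤ d1 * (d0 * d1 - (e.re^2 + e.im^2)) := by
    have := (Complex.le_def.mp (hpos' ![-(d1 : ℂ), e])).1
    simp [dotProduct, Matrix.mulVec, Fin.sum_univ_two, Complex.mul_re, Complex.mul_im,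
      Complex.star_def] at this
    nlinarith [this]
  have hdet : 0 ≤ d0 * d1 - (e.re^2 + e.im^2) := by nlinarith [hD0, hD1]
  refine ⟨mkE3 (2 * e.re) (2 * e.im) (d0 - d1), ?_, ?_⟩
  · rw [norm_le_one_E3]
    show (2*e.re)^2 + (2*e.im)^2 + (d0-d1)^2 ≤ 1
    nlinarith [hdet, hsum]
  · have hr0 : (mkE3 (2 * e.re) (2 * e.im) (d0 - d1)) 0 = 2*e.re := rfl
    have hr1 : (mkE3 (2 * e.re) (2 * e.im) (d0 - d1)) 1 = 2*e.im := rfl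
    have hr2 : (mkE3 (2 * e.re) (2 * e.im) (d0 - d1)) 2 = d0 - d1 := rfl
    rw [hEq, rho_entries, hr0, hr1, hr2]
    ext i j
    fin_cases i <;> fin_cases j <;>
      simp only [Matrix.cons_val', Matrix.cons_val_zero, Matrix.cons_val_one, Matrix.head_cons,
        Matrix.empty_val', Matrix.cons_val_fin_one, Matrix.head_fin_const, Matrix.of_apply] <;>
      rw [Complex.ext_iff] <;> constructor <;>
      simp [Complex.div_re, Complex.div_im, Complex.normSq, Complex.star_def] <;>
    linarith [hsum]

lemma detG_pos' {α β γ : ℝ}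
    (hγ : γ ∈ Set.Ioo 0 Real.pi) (hβ : β ∈ Set.Ioo 0 Real.pi) (hα : α ∈ Set.Ioo 0 Real.pi)
    (h1 : α < β + γ) (h2 : β < γ + α) (h3 : γ < α + β) (h4 : α + β + γ < 2 * Real.pi) :
    0 < 1 - Real.cos α ^ 2 - Real.cos β ^ 2 - Real.cos γ ^ 2
        + 2 * Real.cos α * Real.cos β * Real.cos γ := by
  have hA : Real.cos α < Real.cos (β - γ) := by
    rw [← Real.cos_abs (β - γ)]
    exact Real.cos_lt_cos_of_nonneg_of_le_pi (abs_nonneg _) hα.2.le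
      (abs_lt.mpr ⟨by linarith, by linarith⟩)
  have hB : Real.cos (β + γ) < Real.cos α := by
    rcases le_or_gt (β + γ) Real.pi with h | h
    · exact Real.cos_lt_cos_of_nonneg_of_le_pi hα.1.le h h1
    · have heq : Real.cos (β + γ) = Real.cos (2 * Real.pi - (β + γ)) :=
        (Real.cos_two_pi_sub _).symm
      rw [heq]
      exact Real.cos_lt_cos_of_nonneg_of_le_pi hα.1.le (by linarith) (by linarith)
  rw [Real.cos_sub] at hA
  rw [Real.cos_add] at hB
  nlinarith [mul_pos (sub_pos.mpr hA) (sub_pos.mpr hB), Real.sin_sq_add_cos_sq β,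
    Real.sin_sq_add_cos_sq γ]

lemma quad_transfer {S M : Matrix (Fin 3) (Fin 3) ℝ} {d : ℝ}
    (h : Sᵀ * M * S = d • (1 : Matrix (Fin 3) (Fin 3) ℝ)) (r : Fin 3 → ℝ) :
    (S *ᵥ r) ⬝ᵥ (M *ᵥ (S *ᵥ r)) = d * (r ⬝ᵥ r) := by
  rw [Matrix.mulVec_mulVec, Matrix.dotProduct_mulVec]
  rw [show S *ᵥ r = r ᵥ* Sᵀ by rw [Matrix.vecMul_transpose]]
  rw [Matrix.vecMul_vecMul, ← Matrix.mul_assoc, h]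
  simp [Matrix.vecMul, dotProduct, Fin.sum_univ_three, Matrix.smul_apply, Matrix.one_apply]
  ring

lemma sign_exists (φ1 φ2 φ3 K R u v w : ℝ)
    (h : φ1*u*v + φ2*v*w + φ3*u*w + K ≥ R) :
    ∃ ε : ℝ, (ε = 1 ∨ ε = -1) ∧
      abs (φ1 * abs u + ε*(φ2 * abs w)) * abs v + ε*(φ3*(abs w * abs u)) + K ≥ R := by
  refine ⟨if 0 ≤ u*w then 1 else -1, by split_ifs <;> simp, ?_⟩
  have h3 : (if 0 ≤ u*w then (1:ℝ) else -1)*(φ3*(abs w * abs u)) = φ3*(u*w) := by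
    rw [show abs w * abs u = |u*w| by rw [abs_mul]; ring]
    split_ifs with h'
    · rw [abs_of_nonneg h']; ring
    · rw [abs_of_neg (lt_of_not_ge h')]; ring
  have h1 : abs (φ1 * abs u + (if 0 ≤ u*w then (1:ℝ) else -1)*(φ2 * abs w)) = |φ1*u + φ2*w| := by
    split_ifs with h'
    · have hcase : (0 ≤ u ∧ 0 ≤ w) ∨ (u ≤ 0 ∧ w ≤ 0) := by
        rcases le_or_gt 0 u with hu | hu
        · rcases le_or_gt 0 w with hw | hw
          · exact Or.inl ⟨hu, hw⟩
          · right; refine ⟨?_, hw.le⟩; nlinarith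
        · right; refine ⟨hu.le, ?_⟩; nlinarith
      rcases hcase with ⟨hu, hw⟩ | ⟨hu, hw⟩
      · rw [abs_of_nonneg hu, abs_of_nonneg hw]; ring_nf
      · rw [abs_of_nonpos hu, abs_of_nonpos hw]
        rw [show φ1 * -u + 1*(φ2 * -w) = -(φ1*u + φ2*w) by ring, abs_neg]
    · push_neg at h'
      have hcase : (0 ≤ u ∧ w ≤ 0) ∨ (u ≤ 0 ∧ 0 ≤ w) := by
        rcases le_or_gt 0 u with hu | hu
        · left; refine ⟨hu, ?_⟩; nlinarith
        · right; refine ⟨hu.le, ?_⟩; nlinarith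
      rcases hcase with ⟨hu, hw⟩ | ⟨hu, hw⟩
      · rw [abs_of_nonneg hu, abs_of_nonpos hw]; ring_nf
      · rw [abs_of_nonpos hu, abs_of_nonneg hw]
        rw [show φ1 * -u + -1*(φ2 * w) = -(φ1*u + φ2*w) by ring, abs_neg]
  rw [h3, h1]
  have hle : (φ1*u + φ2*w)*v ≤ |φ1*u + φ2*w| * abs v := by
    rw [← abs_mul]; exact le_abs_self _
  nlinarith [hle]

lemma sign_choose (φ1 φ2 φ3 K R U V W ε : ℝ) (hU : 0 ≤ U) (hV : 0 ≤ V) (hW : 0 ≤ W)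
    (hε : ε = 1 ∨ ε = -1)
    (h : abs (φ1*U + ε*(φ2*W)) * V + ε*(φ3*(W*U)) + K ≥ R) :
    ∃ u v w : ℝ, |u| = U ∧ |v| = V ∧ |w| = W ∧ φ1*u*v + φ2*v*w + φ3*u*w + K ≥ R := by
  refine ⟨U, if 0 ≤ φ1*U + ε*(φ2*W) then V else -V, ε*W, abs_of_nonneg hU, ?_, ?_, ?_⟩
  · split_ifs
    · exact abs_of_nonneg hV
    · rw [abs_neg]; exact abs_of_nonneg hV
  · rcases hε with rfl | rfl <;> simp [abs_of_nonneg hW]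
  · have key : φ1*U*(if 0 ≤ φ1*U + ε*(φ2*W) then V else -V)
        + φ2*(if 0 ≤ φ1*U + ε*(φ2*W) then V else -V)*(ε*W)
        = abs (φ1*U + ε*(φ2*W)) * V := by
      split_ifs with h'
      · rw [abs_of_nonneg h']; ring
      · rw [abs_of_neg (lt_of_not_ge h')]; ring
    have key2 : φ3*U*(ε*W) = ε*(φ3*(W*U)) := by ring
    linarith [key, key2, h]

-- ===== end auxiliary lemmas =====

set_option maxHeartbeats 2000000 in
/-- the uncertainty region of three qubit observables with unit Bloch vectors,
in terms of the pairwise angles α, β, γ. -/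
theorem uncertainty_region_three_unit_observables
    (a0 b0 c0 α β γ : ℝ) (a b c : E3)
    (ha : ‖a‖ = 1) (hb : ‖b‖ = 1) (hc : ‖c‖ = 1)
    (hγ : γ ∈ Set.Ioo 0 Real.pi) (hβ : β ∈ Set.Ioo 0 Real.pi) (hα : α ∈ Set.Ioo 0 Real.pi)
    (hab : (inner ℝ a b : ℝ) = Real.cos γ)
    (hac : (inner ℝ a c : ℝ) = Real.cos β)
    (hbc : (inner ℝ b c : ℝ) = Real.cos α)
    (h1 : α < β + γ) (h2 : β < γ + α) (h3 : γ < α + β) (h4 : α + β + γ < 2 * Real.pi) :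
    {p : ℝ × ℝ × ℝ | ∃ ρ : Matrix (Fin 2) (Fin 2) ℂ, IsDensityMatrix ρ ∧
        p = (uncertainty (qObs a0 a) ρ, uncertainty (qObs b0 b) ρ,
              uncertainty (qObs c0 c) ρ)} =
    {p : ℝ × ℝ × ℝ | p.1 ∈ Set.Icc (0 : ℝ) 1 ∧ p.2.1 ∈ Set.Icc (0 : ℝ) 1 ∧
        p.2.2 ∈ Set.Icc (0 : ℝ) 1 ∧
        ∃ ε : ℝ, (ε = 1 ∨ ε = -1) ∧
          |phi γ α β * Real.sqrt (1 - p.1 ^ 2) + ε * phi α β γ * Real.sqrt (1 - p.2.2 ^ 2)|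
                * Real.sqrt (1 - p.2.1 ^ 2)
              + ε * phi β γ α * Real.sqrt ((1 - p.2.2 ^ 2) * (1 - p.1 ^ 2))
              + (1 / 2) * (Real.sin α ^ 2 * p.1 ^ 2 + Real.sin β ^ 2 * p.2.1 ^ 2
                  + Real.sin γ ^ 2 * p.2.2 ^ 2)
            ≥ 1 - Real.cos α * Real.cos β * Real.cos γ} := by
  have haa : a 0^2 + a 1^2 + a 2^2 = 1 := by rw [← norm_sq_E3', ha]; norm_num
  have hbb : b 0^2 + b 1^2 + b 2^2 = 1 := by rw [← norm_sq_E3', hb]; norm_num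
  have hcc : c 0^2 + c 1^2 + c 2^2 = 1 := by rw [← norm_sq_E3', hc]; norm_num
  rw [inner_E3] at hab hac hbc
  have hba : b 0*a 0 + b 1*a 1 + b 2*a 2 = Real.cos γ := by linear_combination hab
  have hca : c 0*a 0 + c 1*a 1 + c 2*a 2 = Real.cos β := by linear_combination hac
  have hcb : c 0*b 0 + c 1*b 1 + c 2*b 2 = Real.cos α := by linear_combination hbc
  set S : Matrix (Fin 3) (Fin 3) ℝ := Matrix.of (fun i j => ![a, b, c] i j) with hSdef
  set G : Matrix (Fin 3) (Fin 3) ℝ :=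
    !![1, Real.cos γ, Real.cos β; Real.cos γ, 1, Real.cos α; Real.cos β, Real.cos α, 1]
    with hGdef
  have hSST : S * Sᵀ = G := by
    ext i j
    fin_cases i <;> fin_cases j <;>
      simp [hSdef, hGdef, Matrix.mul_apply, Fin.sum_univ_three, Matrix.transpose_apply] <;>
      linarith [haa, hbb, hcc, hab, hac, hbc, hba, hca, hcb]
  have hdetG : G.det = 1 - Real.cos α^2 - Real.cos β^2 - Real.cos γ^2
      + 2*Real.cos α*Real.cos β*Real.cos γ := by
    rw [hGdef]
    simp [Matrix.det_fin_three]
    ring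
  have hdG_pos : 0 < G.det := by
    rw [hdetG]; exact detG_pos' hγ hβ hα h1 h2 h3 h4
  have hdS2 : S.det * S.det = G.det := by
    rw [← hSST, Matrix.det_mul, Matrix.det_transpose]
  have hSu : IsUnit S.det := by
    rw [isUnit_iff_ne_zero]
    intro h0
    rw [h0, mul_zero] at hdS2
    linarith only [hdG_pos, hdS2.symm.le]
  have hkey : Sᵀ * (Matrix.adjugate G) * S = G.det • (1 : Matrix (Fin 3) (Fin 3) ℝ) := by
    rw [← hSST, Matrix.adjugate_mul_distrib]
    have e1 : Sᵀ * (Matrix.adjugate Sᵀ * Matrix.adjugate S) * S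
        = (Sᵀ * Matrix.adjugate Sᵀ) * (Matrix.adjugate S * S) := by
      simp only [Matrix.mul_assoc]
    rw [e1, Matrix.mul_adjugate, Matrix.adjugate_mul, Matrix.det_transpose,
      Matrix.smul_mul, Matrix.mul_smul, smul_smul, Matrix.one_mul,
      Matrix.det_mul, Matrix.det_transpose]
  have hquad : ∀ q : Fin 3 → ℝ, q ⬝ᵥ (Matrix.adjugate G *ᵥ q)
      = (1 - Real.cos α^2)*(q 0)^2 + (1 - Real.cos β^2)*(q 1)^2 + (1 - Real.cos γ^2)*(q 2)^2
        - 2*(phi γ α β)*(q 0)*(q 1) - 2*(phi α β γ)*(q 1)*(q 2)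
        - 2*(phi β γ α)*(q 0)*(q 2) := by
    intro q
    rw [hGdef]
    simp [Matrix.adjugate_fin_three, dotProduct, Matrix.mulVec, Fin.sum_univ_three, phi]
    ring
  have hScomp : ∀ q : Fin 3 → ℝ,
      (S *ᵥ q) 0 = a 0*q 0 + a 1*q 1 + a 2*q 2
      ∧ (S *ᵥ q) 1 = b 0*q 0 + b 1*q 1 + b 2*q 2
      ∧ (S *ᵥ q) 2 = c 0*q 0 + c 1*q 1 + c 2*q 2 := by
    intro q
    refine ⟨?_, ?_, ?_⟩ <;> simp [hSdef, Matrix.mulVec, dotProduct, Fin.sum_univ_three]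
  ext p
  obtain ⟨x, y, z⟩ := p
  simp only [Set.mem_setOf_eq]
  constructor
  · rintro ⟨ρ, hρdm, hpeq⟩
    obtain ⟨r, hr, rfl⟩ := density_eq_rho hρdm
    simp only [Prod.mk.injEq] at hpeq
    obtain ⟨hxe, hye, hze⟩ := hpeq
    set u := a 0*r 0 + a 1*r 1 + a 2*r 2 with hu
    set v := b 0*r 0 + b 1*r 1 + b 2*r 2 with hv
    set w := c 0*r 0 + c 1*r 1 + c 2*r 2 with hw
    have hu' := hu; have hv' := hv; have hw' := hw
    clear_value u v w
    have hxe' : x = Real.sqrt (1 - u^2) := by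
      rw [hxe, uncertainty, variance_rho a0 a r ha, inner_E3, hu]
    have hye' : y = Real.sqrt (1 - v^2) := by
      rw [hye, uncertainty, variance_rho b0 b r hb, inner_E3, hv]
    have hze' : z = Real.sqrt (1 - w^2) := by
      rw [hze, uncertainty, variance_rho c0 c r hc, inner_E3, hw]
    have hsq : ∀ d : E3, ‖d‖ = 1 →
        (d 0*r 0 + d 1*r 1 + d 2*r 2)^2 ≤ 1 := by
      intro d hd
      have h1' : |(inner ℝ d r : ℝ)| ≤ ‖d‖ * ‖r‖ := abs_real_inner_le_norm d r
      rw [inner_E3, hd, one_mul] at h1'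
      have habs := abs_le.mp (h1'.trans hr)
      nlinarith only [habs.1, habs.2]
    have hu2 : u^2 ≤ 1 := by rw [hu']; exact hsq a ha
    have hv2 : v^2 ≤ 1 := by rw [hv']; exact hsq b hb
    have hw2 : w^2 ≤ 1 := by rw [hw']; exact hsq c hc
    have hx2 : x^2 = 1 - u^2 := by rw [hxe', Real.sq_sqrt (by linarith only [hu2])]
    have hy2 : y^2 = 1 - v^2 := by rw [hye', Real.sq_sqrt (by linarith only [hv2])]
    have hz2 : z^2 = 1 - w^2 := by rw [hze', Real.sq_sqrt (by linarith only [hw2])]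
    have hx01 : x ∈ Set.Icc (0:ℝ) 1 := by
      rw [hxe']
      exact ⟨Real.sqrt_nonneg _, Real.sqrt_le_one.mpr (by linarith only [sq_nonneg u])⟩
    have hy01 : y ∈ Set.Icc (0:ℝ) 1 := by
      rw [hye']
      exact ⟨Real.sqrt_nonneg _, Real.sqrt_le_one.mpr (by linarith only [sq_nonneg v])⟩
    have hz01 : z ∈ Set.Icc (0:ℝ) 1 := by
      rw [hze']
      exact ⟨Real.sqrt_nonneg _, Real.sqrt_le_one.mpr (by linarith only [sq_nonneg w])⟩
    set rf : Fin 3 → ℝ := ![r 0, r 1, r 2] with hrfdef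
    have hrf1 : rf ⬝ᵥ rf ≤ 1 := by
      have hr' := (norm_le_one_E3 r).mp hr
      simp [hrfdef, dotProduct, Fin.sum_univ_three]
      nlinarith only [hr']
    have hq := quad_transfer hkey rf
    rw [hquad (S *ᵥ rf)] at hq
    obtain ⟨hc0, hc1, hc2⟩ := hScomp rf
    have hrf0 : rf 0 = r 0 := rfl
    have hrf1' : rf 1 = r 1 := rfl
    have hrf2 : rf 2 = r 2 := rfl
    rw [hrf0, hrf1', hrf2, ← hu] at hc0
    rw [hrf0, hrf1', hrf2, ← hv] at hc1
    rw [hrf0, hrf1', hrf2, ← hw] at hc2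
    rw [hc0, hc1, hc2] at hq
    have hQle : (1 - Real.cos α^2)*u^2 + (1 - Real.cos β^2)*v^2 + (1 - Real.cos γ^2)*w^2
        - 2*(phi γ α β)*u*v - 2*(phi α β γ)*v*w - 2*(phi β γ α)*u*w ≤ G.det := by
      rw [hq]
      exact mul_le_of_le_one_right hdG_pos.le hrf1
    rw [hdetG, show u^2 = 1 - x^2 by linarith only [hx2], show v^2 = 1 - y^2 by linarith only [hy2],
      show w^2 = 1 - z^2 by linarith only [hz2]] at hQle
    have hQ' : phi γ α β*u*v + phi α β γ*v*w + phi β γ α*u*w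
        + (1/2)*((1 - Real.cos α^2)*x^2 + (1 - Real.cos β^2)*y^2 + (1 - Real.cos γ^2)*z^2)
        ≥ 1 - Real.cos α*Real.cos β*Real.cos γ := by linarith only [hQle]
    refine ⟨hx01, hy01, hz01, ?_⟩
    obtain ⟨ε, hεpm, hεineq⟩ := sign_exists (phi γ α β) (phi α β γ) (phi β γ α)
      ((1/2)*((1 - Real.cos α^2)*x^2 + (1 - Real.cos β^2)*y^2 + (1 - Real.cos γ^2)*z^2))
      (1 - Real.cos α*Real.cos β*Real.cos γ) u v w hQ'
    refine ⟨ε, hεpm, ?_⟩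
    have e1 : Real.sqrt (1 - x^2) = |u| := by
      rw [show (1:ℝ) - x^2 = u^2 by linarith only [hx2], Real.sqrt_sq_eq_abs]
    have e2 : Real.sqrt (1 - y^2) = |v| := by
      rw [show (1:ℝ) - y^2 = v^2 by linarith only [hy2], Real.sqrt_sq_eq_abs]
    have e3 : Real.sqrt (1 - z^2) = |w| := by
      rw [show (1:ℝ) - z^2 = w^2 by linarith only [hz2], Real.sqrt_sq_eq_abs]
    have e4 : Real.sqrt ((1 - z^2)*(1 - x^2)) = |w| * |u| := by
      rw [show ((1:ℝ) - z^2)*(1 - x^2) = (w*u)^2 by rw [hx2, hz2]; ring,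
        Real.sqrt_sq_eq_abs, abs_mul]
    rw [Real.sin_sq α, Real.sin_sq β, Real.sin_sq γ, e1, e2, e3, e4,
      mul_assoc ε (phi α β γ) (|w|), mul_assoc ε (phi β γ α) (|w| * |u|)]
    exact hεineq
  · rintro ⟨⟨hx0, hx1⟩, ⟨hy0, hy1⟩, ⟨hz0, hz1⟩, ε, hεpm, hεineq⟩
    have hzz : (0:ℝ) ≤ 1 - z^2 := by nlinarith only [hz0, hz1]
    have hxx : (0:ℝ) ≤ 1 - x^2 := by nlinarith only [hx0, hx1]
    have hyy : (0:ℝ) ≤ 1 - y^2 := by nlinarith only [hy0, hy1]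
    rw [Real.sin_sq α, Real.sin_sq β, Real.sin_sq γ, Real.sqrt_mul hzz,
      mul_assoc ε (phi α β γ) (Real.sqrt (1 - z^2)),
      mul_assoc ε (phi β γ α) (Real.sqrt (1 - z^2) * Real.sqrt (1 - x^2))] at hεineq
    obtain ⟨u, v, w, hu, hv, hw, hQ'⟩ := sign_choose (phi γ α β) (phi α β γ) (phi β γ α)
      ((1/2)*((1 - Real.cos α^2)*x^2 + (1 - Real.cos β^2)*y^2 + (1 - Real.cos γ^2)*z^2))
      (1 - Real.cos α*Real.cos β*Real.cos γ)
      (Real.sqrt (1 - x^2)) (Real.sqrt (1 - y^2)) (Real.sqrt (1 - z^2)) ε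
      (Real.sqrt_nonneg _) (Real.sqrt_nonneg _) (Real.sqrt_nonneg _) hεpm hεineq
    have hu2 : u^2 = 1 - x^2 := by rw [← sq_abs, hu, Real.sq_sqrt hxx]
    have hv2 : v^2 = 1 - y^2 := by rw [← sq_abs, hv, Real.sq_sqrt hyy]
    have hw2 : w^2 = 1 - z^2 := by rw [← sq_abs, hw, Real.sq_sqrt hzz]
    have hQle : (1 - Real.cos α^2)*u^2 + (1 - Real.cos β^2)*v^2 + (1 - Real.cos γ^2)*w^2
        - 2*(phi γ α β)*u*v - 2*(phi α β γ)*v*w - 2*(phi β γ α)*u*w ≤ G.det := by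
      rw [hu2, hv2, hw2, hdetG]
      linarith only [hQ']
    set q : Fin 3 → ℝ := ![u, v, w] with hqdef
    set rf : Fin 3 → ℝ := S⁻¹ *ᵥ q with hrfdef
    have hSrf : S *ᵥ rf = q := by
      rw [hrfdef, Matrix.mulVec_mulVec, Matrix.mul_nonsing_inv S hSu, Matrix.one_mulVec]
    have hq := quad_transfer hkey rf
    rw [hSrf, hquad q] at hq
    have hq0 : q 0 = u := rfl
    have hq1 : q 1 = v := rfl
    have hq2 : q 2 = w := rfl
    rw [hq0, hq1, hq2] at hq
    have hrfle : rf ⬝ᵥ rf ≤ 1 := by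
      have hh : G.det * (rf ⬝ᵥ rf) ≤ G.det * 1 := by rw [mul_one, ← hq]; exact hQle
      exact le_of_mul_le_mul_left hh hdG_pos
    have hrEn : ‖mkE3 (rf 0) (rf 1) (rf 2)‖ ≤ 1 := by
      rw [norm_le_one_E3]
      have hrfle' := hrfle
      simp only [dotProduct, Fin.sum_univ_three] at hrfle'
      show (rf 0)^2 + (rf 1)^2 + (rf 2)^2 ≤ 1
      linarith only [hrfle']
    refine ⟨rho (mkE3 (rf 0) (rf 1) (rf 2)), rho_isDensity _ hrEn, ?_⟩
    obtain ⟨hc0, hc1, hc2⟩ := hScomp rf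
    rw [hSrf] at hc0 hc1 hc2
    have hiu : (inner ℝ a (mkE3 (rf 0) (rf 1) (rf 2)) : ℝ) = u := by
      rw [inner_E3]
      show a 0*rf 0 + a 1*rf 1 + a 2*rf 2 = u
      rw [← hc0, hq0]
    have hiv : (inner ℝ b (mkE3 (rf 0) (rf 1) (rf 2)) : ℝ) = v := by
      rw [inner_E3]
      show b 0*rf 0 + b 1*rf 1 + b 2*rf 2 = v
      rw [← hc1, hq1]
    have hiw : (inner ℝ c (mkE3 (rf 0) (rf 1) (rf 2)) : ℝ) = w := by
      rw [inner_E3]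
      show c 0*rf 0 + c 1*rf 1 + c 2*rf 2 = w
      rw [← hc2, hq2]
    have hux : uncertainty (qObs a0 a) (rho (mkE3 (rf 0) (rf 1) (rf 2))) = x := by
      rw [uncertainty, variance_rho a0 a _ ha, hiu,
        show (1:ℝ) - u^2 = x^2 by linarith only [hu2], Real.sqrt_sq hx0]
    have huy : uncertainty (qObs b0 b) (rho (mkE3 (rf 0) (rf 1) (rf 2))) = y := by
      rw [uncertainty, variance_rho b0 b _ hb, hiv,
        show (1:ℝ) - v^2 = y^2 by linarith only [hv2], Real.sqrt_sq hy0]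
    have huz : uncertainty (qObs c0 c) (rho (mkE3 (rf 0) (rf 1) (rf 2))) = z := by
      rw [uncertainty, variance_rho c0 c _ hc, hiw,
        show (1:ℝ) - w^2 = z^2 by linarith only [hw2], Real.sqrt_sq hz0]
    rw [hux, huy, huz]


end
end
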